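/- White's stratification theorem, dimension part: under the Structural Hypotheses (i') and (ii') of White's setting, for every ℓ ∈ {1, …, n} the Hausdorff dimension of the stratum Σ_ℓ is at most ℓ. -/

import Mathlib

open Metric MeasureTheory Set Filter
open scoped ENNReal NNReal

noncomputable section

/-- A function `g : ℝⁿ → [0,∞)` is conical if it is upper semicontinuous and, whenever
`g(z) = g(0)`, it is positively 0-homogeneous with respect to `z`. -/
def IsConical {n : ℕ} (g : EuclideanSpace ℝ (Fin n) → ℝ) : Prop :=
  UpperSemicontinuous g ∧ (∀ x, 0 ≤ g x) ∧
    ∀ z, g z = g 0 → ∀ (x : EuclideanSpace ℝ (Fin n)) (lam : ℝ), 0 < lam →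
      g (z + lam • x) = g (z + x)

/-- A class `𝒢` of conical functions is compact if every sequence in `𝒢` admits a
subsequence `(g_{i_j})` and a limit `g ∈ 𝒢` with
`limsup_j g_{i_j}(y_j) ≤ g(y)` whenever `y_j → y`. -/
def IsCompactClass {n : ℕ} (G : Set (EuclideanSpace ℝ (Fin n) → ℝ)) : Prop :=
  ∀ g : ℕ → (EuclideanSpace ℝ (Fin n) → ℝ), (∀ i, g i ∈ G) →
    ∃ φ : ℕ → ℕ, StrictMono φ ∧ ∃ g' ∈ G,
      ∀ (y : EuclideanSpace ℝ (Fin n)) (ys : ℕ → EuclideanSpace ℝ (Fin n)),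
        Tendsto ys atTop (nhds y) →
        limsup (fun j => g (φ j) (ys j)) atTop ≤ g' y

/-- The spine `S_g := {z : g(z) = g(0)}` of a conical function. -/
def spine {n : ℕ} (g : EuclideanSpace ℝ (Fin n) → ℝ) : Set (EuclideanSpace ℝ (Fin n)) :=
  {z | g z = g 0}

/-- The dimension of the spine of `g` (for a conical `g` the spine is a linear subspace,
so we take the dimension of its span). -/
def spineDim {n : ℕ} (g : EuclideanSpace ℝ (Fin n) → ℝ) : ℕ :=
  Module.finrank ℝ (Submodule.span ℝ (spine g))

/-- The stratum `Σ_ℓ := {x ∈ Ω : f(x) > 0 and d(x) ≤ ℓ}`, where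
`d(x) = sup {dim S_g : g ∈ 𝒢(x)}`. -/
def whiteStratum {n : ℕ} (Ω : Set (EuclideanSpace ℝ (Fin n)))
    (f : EuclideanSpace ℝ (Fin n) → ℝ)
    (G : EuclideanSpace ℝ (Fin n) → Set (EuclideanSpace ℝ (Fin n) → ℝ)) (ℓ : ℕ) :
    Set (EuclideanSpace ℝ (Fin n)) :=
  {x ∈ Ω | 0 < f x ∧ ∀ g ∈ G x, spineDim g ≤ ℓ}

/-- White's Structural Hypothesis (ii'): for every `x ∈ Ω` and every sequence `r_i ↓ 0`
there are a subsequence `r_{i_j} ↓ 0` and `g ∈ 𝒢(x)` such that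
`limsup_j f(x + r_{i_j} y_j) ≤ g(y)` for all `y, y_j ∈ B_1` with `y_j → y`. -/
def WhiteHypII {n : ℕ} (Ω : Set (EuclideanSpace ℝ (Fin n)))
    (f : EuclideanSpace ℝ (Fin n) → ℝ)
    (G : EuclideanSpace ℝ (Fin n) → Set (EuclideanSpace ℝ (Fin n) → ℝ)) : Prop :=
  ∀ x ∈ Ω, ∀ r : ℕ → ℝ, (∀ i, 0 < r i) → StrictAnti r → Tendsto r atTop (nhds 0) →
    ∃ φ : ℕ → ℕ, StrictMono φ ∧ ∃ g ∈ G x,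
      ∀ y ∈ ball (0 : EuclideanSpace ℝ (Fin n)) 1,
      ∀ ys : ℕ → EuclideanSpace ℝ (Fin n),
        (∀ j, ys j ∈ ball (0 : EuclideanSpace ℝ (Fin n)) 1) →
        Tendsto ys atTop (nhds y) →
        limsup (fun j => f (x + r (φ j) • ys j)) atTop ≤ g y

namespace WhiteProof

variable {n : ℕ}

local notation "E" => EuclideanSpace ℝ (Fin n)

lemma conical_le {g : E → ℝ} (hg : IsConical g) (y : E) : g y ≤ g 0 := by
  by_contra h
  push_neg at h
  have h0 : ∀ lam : ℝ, 0 < lam → g (lam • y) = g y := by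
    intro lam hlam
    simpa using hg.2.2 0 rfl y lam hlam
  have hev : ∀ᶠ z in nhds (0 : E), g z < g y := hg.1 0 (g y) h
  have htt : Tendsto (fun k : ℕ => ((k : ℝ) + 1)⁻¹ • y) atTop (nhds (0 : E)) := by
    have h1 : Tendsto (fun k : ℕ => ((k : ℝ) + 1)⁻¹) atTop (nhds (0 : ℝ)) :=
      tendsto_one_div_add_atTop_nhds_zero_nat.congr (by intro k; rw [one_div])
    simpa using h1.smul_const y
  have := (htt.eventually hev).exists
  obtain ⟨k, hk⟩ := this
  rw [h0 _ (by positivity)] at hk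
  exact lt_irrefl _ hk

lemma mem_spine_of_ge {g : E → ℝ} (hg : IsConical g) {y : E} (h : g 0 ≤ g y) :
    y ∈ spine g := le_antisymm (conical_le hg y) h

lemma usc_bddAbove {K : Set E} {f : E → ℝ} (hK : IsCompact K)
    (hf : UpperSemicontinuousOn f K) : ∃ b : ℝ, ∀ y ∈ K, f y ≤ b := by
  by_contra h
  push_neg at h
  have hy : ∀ k : ℕ, ∃ y ∈ K, (k : ℝ) < f y := fun k => h k
  choose y hyK hyf using hy
  obtain ⟨a, haK, σ, hσ, hconv⟩ := hK.tendsto_subseq hyK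
  have hconv' : Tendsto (fun k => y (σ k)) atTop (nhdsWithin a K) :=
    tendsto_nhdsWithin_iff.2 ⟨hconv, Eventually.of_forall fun k => hyK _⟩
  have hev : ∀ᶠ k in atTop, f (y (σ k)) < f a + 1 :=
    hconv'.eventually (hf a haK (f a + 1) (by linarith))
  obtain ⟨k₀, hk₀⟩ := exists_nat_ge (f a + 1)
  obtain ⟨k, hk, hklt⟩ := (hev.and (eventually_ge_atTop k₀)).exists
  have : (k₀ : ℝ) ≤ (σ k : ℝ) := by
    exact_mod_cast le_trans hklt (hσ.le_apply)
  have := hyf (σ k)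
  linarith

lemma le_infDist_of_forall {s : Set E} (hs : s.Nonempty) {x : E} {b : ℝ}
    (h : ∀ y ∈ s, b ≤ dist x y) : b ≤ infDist x s := by
  by_contra hlt
  push_neg at hlt
  obtain ⟨y, hys, hy⟩ := (infDist_lt_iff hs).1 hlt
  exact absurd (h y hys) (by linarith)

lemma infDist_inv_smul_ge (V : Submodule ℝ E) (w : E) (c : ℝ) (hc : 0 < c) :
    c⁻¹ * infDist w (V : Set E) ≤ infDist (c⁻¹ • w) (V : Set E) := by
  refine le_infDist_of_forall ⟨0, V.zero_mem⟩ ?_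
  intro v hv
  have hvc : c • v ∈ (V : Set E) := V.smul_mem c hv
  have h1 : infDist w (V : Set E) ≤ dist w (c • v) := infDist_le_dist_of_mem hvc
  have h2 : dist (c⁻¹ • w) v = c⁻¹ * dist w (c • v) := by
    rw [dist_eq_norm, dist_eq_norm]
    have : c⁻¹ • w - v = c⁻¹ • (w - c • v) := by
      rw [smul_sub, smul_smul, inv_mul_cancel₀ hc.ne', one_smul]
    rw [this, norm_smul, Real.norm_eq_abs, abs_of_pos (inv_pos.2 hc)]
  rw [h2]
  have := inv_pos.2 hc
  nlinarith [h1, this.le]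

end WhiteProof
namespace WhiteProof

lemma coord_abs_le_norm {m : ℕ} (y : EuclideanSpace ℝ (Fin m)) (i : Fin m) : |y i| ≤ ‖y‖ := by
  rw [EuclideanSpace.norm_eq, ← Real.sqrt_sq_eq_abs]
  simp only [Real.norm_eq_abs, sq_abs]
  refine Real.sqrt_le_sqrt ?_
  exact Finset.single_le_sum (f := fun j => y j ^ 2) (fun j _ => sq_nonneg _) (Finset.mem_univ i)

lemma grid_cover (m : ℕ) (R δ : ℝ) (hR : 0 < R) (hδ : 0 < δ) :
    ∃ t : Finset (EuclideanSpace ℝ (Fin m)),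
      (t.card : ℝ) ≤ (2 * R * (Real.sqrt m + 1) / δ + 1) ^ m ∧
      ∀ y : EuclideanSpace ℝ (Fin m), ‖y‖ ≤ R → ∃ c ∈ t, dist y c ≤ δ := by
  classical
  set h : ℝ := δ / (Real.sqrt m + 1) with hh
  have hsm : (0:ℝ) ≤ Real.sqrt m := Real.sqrt_nonneg _
  have hhpos : 0 < h := div_pos hδ (by linarith)
  set K : ℕ := ⌈2 * R / h⌉₊ with hK
  have hKpos : 1 ≤ K := Nat.one_le_iff_ne_zero.2 (by
    simp only [hK, ne_eq, Nat.ceil_eq_zero, not_le]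
    positivity)
  have hKh : 2 * R ≤ K * h := by
    have := Nat.le_ceil (2 * R / h)
    calc 2 * R = 2 * R / h * h := by field_simp
    _ ≤ K * h := by nlinarith [hhpos]
  set c : (Fin m → Fin K) → EuclideanSpace ℝ (Fin m) :=
    fun a => WithLp.toLp 2 (fun i => -R + h * (a i : ℝ) + h / 2 : Fin m → ℝ) with hc
  refine ⟨Finset.image c Finset.univ, ?_, ?_⟩
  · calc (((Finset.image c Finset.univ).card : ℕ) : ℝ)
        ≤ ((Finset.univ.card : ℕ) : ℝ) := by
          exact_mod_cast Finset.card_image_le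
    _ = ((K ^ m : ℕ) : ℝ) := by
          simp [Finset.card_univ]
    _ ≤ (2 * R / h + 1) ^ m := by
          push_cast
          refine pow_le_pow_left₀ (by positivity) ?_ m
          have : (K : ℝ) < 2 * R / h + 1 := Nat.ceil_lt_add_one (by positivity)
          linarith
    _ = (2 * R * (Real.sqrt m + 1) / δ + 1) ^ m := by
          rw [hh, div_div_eq_mul_div]
  · intro y hy
    have hcoord : ∀ i, |y i| ≤ R := fun i => (coord_abs_le_norm y i).trans hy
    have hchoice : ∀ i : Fin m, ∃ a : Fin K, |y i - (-R + h * (a : ℝ) + h / 2)| ≤ h / 2 := by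
      intro i
      set u : ℝ := y i + R with hu
      have hu0 : 0 ≤ u := by have := (abs_le.1 (hcoord i)).1; simp [hu]; linarith
      have hu2 : u ≤ 2 * R := by have := (abs_le.1 (hcoord i)).2; simp [hu]; linarith
      set j : ℕ := min (K - 1) ⌊u / h⌋₊ with hj
      have hjK : j < K := lt_of_le_of_lt (min_le_left _ _) (by omega)
      refine ⟨⟨j, hjK⟩, ?_⟩
      have hlow : (j : ℝ) * h ≤ u := by
        have h1 : (j : ℝ) ≤ ⌊u / h⌋₊ := by exact_mod_cast min_le_right _ _
        have h2 : (⌊u / h⌋₊ : ℝ) ≤ u / h := Nat.floor_le (by positivity)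
        calc (j:ℝ) * h ≤ u / h * h := by nlinarith
        _ = u := by field_simp
      have hhigh : u ≤ ((j : ℝ) + 1) * h := by
        rcases le_or_gt ⌊u / h⌋₊ (K - 1) with hcase | hcase
        · have hje : j = ⌊u / h⌋₊ := min_eq_right hcase
          have := Nat.lt_floor_add_one (u / h)
          rw [← hje] at this
          calc u = u / h * h := by field_simp
          _ ≤ ((j:ℝ) + 1) * h := by nlinarith
        · have hje : j = K - 1 := min_eq_left hcase.le
          have : ((j : ℝ) + 1) = (K : ℝ) := by
            rw [hje]; push_cast [Nat.cast_sub hKpos]; ring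
          rw [this]; linarith
      rw [abs_le]
      constructor <;> [skip; skip] <;> simp only [hu] at hlow hhigh <;> push_cast <;> nlinarith
    choose a ha using hchoice
    refine ⟨c a, Finset.mem_image_of_mem c (Finset.mem_univ a), ?_⟩
    have hdist : dist y (c a) = Real.sqrt (∑ i, (y i - c a i) ^ 2) := by
      rw [EuclideanSpace.dist_eq]
      congr 1
      refine Finset.sum_congr rfl fun i _ => ?_
      rw [Real.dist_eq, sq_abs]
    rw [hdist]
    have hsum : (∑ i, (y i - c a i) ^ 2) ≤ m * (h / 2) ^ 2 := by
      calc (∑ i, (y i - c a i) ^ 2) ≤ ∑ _i : Fin m, (h / 2) ^ 2 := by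
            refine Finset.sum_le_sum fun i _ => ?_
            have habs : |y i - c a i| ≤ h / 2 := ha i
            have hb := abs_le.1 habs
            exact sq_le_sq' (by linarith [hb.1]) hb.2
      _ = m * (h / 2) ^ 2 := by simp [mul_comm]
    calc Real.sqrt (∑ i, (y i - c a i) ^ 2) ≤ Real.sqrt ((m : ℝ) * (h / 2) ^ 2) :=
          Real.sqrt_le_sqrt hsum
    _ = Real.sqrt m * (h / 2) := by
          rw [Real.sqrt_mul (by positivity), Real.sqrt_sq (by positivity)]
    _ ≤ δ := by
          have hδeq : (Real.sqrt m + 1) * h = δ := by rw [hh]; field_simp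
          nlinarith [hhpos.le, hsm]

end WhiteProof
namespace WhiteProof

variable {n : ℕ}

local notation "E" => EuclideanSpace ℝ (Fin n)

lemma subspace_cover (ℓ : ℕ) (V : Submodule ℝ E) (hV : Module.finrank ℝ V ≤ ℓ)
    (R δ : ℝ) (hR : 0 < R) (hδ : 0 < δ) :
    ∃ t : Finset E, (t.card : ℝ) ≤ (2 * R * (Real.sqrt n + 1) / δ + 1) ^ ℓ ∧
      ∀ v : E, v ∈ V → ‖v‖ ≤ R → ∃ c ∈ t, dist v c ≤ δ := by
  classical
  set m : ℕ := Module.finrank ℝ V with hm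
  have hmn : m ≤ n := by
    have := Submodule.finrank_le V
    rwa [finrank_euclideanSpace_fin] at this
  obtain ⟨t₀, ht₀card, ht₀cover⟩ := grid_cover m R δ hR hδ
  set b := stdOrthonormalBasis ℝ V
  set e : V ≃ₗᵢ[ℝ] EuclideanSpace ℝ (Fin m) := b.repr
  refine ⟨t₀.image (fun c => ((e.symm c : V) : E)), ?_, ?_⟩
  · calc ((t₀.image (fun c => ((e.symm c : V) : E))).card : ℝ) ≤ (t₀.card : ℝ) := by
          exact_mod_cast Finset.card_image_le
    _ ≤ (2 * R * (Real.sqrt m + 1) / δ + 1) ^ m := ht₀card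
    _ ≤ (2 * R * (Real.sqrt n + 1) / δ + 1) ^ ℓ := by
          have hsle : Real.sqrt m ≤ Real.sqrt n := Real.sqrt_le_sqrt (by exact_mod_cast hmn)
          have hbase1 : (1:ℝ) ≤ 2 * R * (Real.sqrt n + 1) / δ + 1 := by
            have : (0:ℝ) ≤ 2 * R * (Real.sqrt n + 1) / δ := by positivity
            linarith
          have hbasele : 2 * R * (Real.sqrt m + 1) / δ + 1 ≤ 2 * R * (Real.sqrt n + 1) / δ + 1 := by
            have : 2 * R * (Real.sqrt m + 1) / δ ≤ 2 * R * (Real.sqrt n + 1) / δ := by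
              gcongr
            linarith
          calc (2 * R * (Real.sqrt m + 1) / δ + 1) ^ m
              ≤ (2 * R * (Real.sqrt n + 1) / δ + 1) ^ m :=
                pow_le_pow_left₀ (by positivity) hbasele m
          _ ≤ (2 * R * (Real.sqrt n + 1) / δ + 1) ^ ℓ :=
                pow_le_pow_right₀ hbase1 (hV.trans_eq' rfl)
  · intro v hv hvR
    have hnorm : ‖e ⟨v, hv⟩‖ ≤ R := by
      rw [e.norm_map]; exact hvR
    obtain ⟨c₀, hc₀t, hc₀⟩ := ht₀cover _ hnorm
    refine ⟨((e.symm c₀ : V) : E), Finset.mem_image_of_mem _ hc₀t, ?_⟩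
    have : dist v ((e.symm c₀ : V) : E) = dist (⟨v, hv⟩ : V) (e.symm c₀) := rfl
    rw [this, ← e.dist_map, e.apply_symm_apply]
    exact hc₀
end WhiteProof
namespace WhiteProof

variable {n : ℕ}

local notation "E" => EuclideanSpace ℝ (Fin n)

lemma cover_step {A : Set E} {x : E} (hxA : x ∈ A) {ρ ε : ℝ} (hρ : 0 < ρ)
    (hε : 0 < ε) (hε2 : ε ≤ 1/2) {ℓ : ℕ} (V : Submodule ℝ E)
    (hV : Module.finrank ℝ V ≤ ℓ)
    (H : ∀ y ∈ A, dist y x ≤ ρ → Metric.infDist (y - x) (V : Set E) ≤ ε * ρ) :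
    ∃ t : Finset E, ↑t ⊆ A ∧ (t.card : ℝ) ≤ (4 * (Real.sqrt n + 1) / ε + 1) ^ ℓ ∧
      ∀ y ∈ A, dist y x ≤ ρ → ∃ c ∈ t, dist y c ≤ 6 * ε * ρ := by
  classical
  obtain ⟨t₀, ht₀card, ht₀cover⟩ := subspace_cover ℓ V hV (2 * ρ) (ε * ρ)
    (by positivity) (by positivity)
  have hbeq : 2 * (2 * ρ) * (Real.sqrt n + 1) / (ε * ρ) + 1
      = 4 * (Real.sqrt n + 1) / ε + 1 := by
    field_simp
    ring
  rw [hbeq] at ht₀card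
  set aa : E → E := fun c =>
    if h : (A ∩ Metric.closedBall (x + c) (3 * ε * ρ)).Nonempty then h.choose else x with haa
  refine ⟨t₀.image aa, ?_, ?_, ?_⟩
  · intro z hz
    simp only [Finset.coe_image, Set.mem_image, Finset.mem_coe] at hz
    obtain ⟨c, _, rfl⟩ := hz
    by_cases h : (A ∩ Metric.closedBall (x + c) (3 * ε * ρ)).Nonempty
    · simp only [haa, dif_pos h]
      exact h.choose_spec.1
    · simp only [haa, dif_neg h]
      exact hxA
  · calc ((t₀.image aa).card : ℝ) ≤ (t₀.card : ℝ) := by exact_mod_cast Finset.card_image_le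
    _ ≤ _ := ht₀card
  · intro y hyA hyd
    have h1 : Metric.infDist (y - x) (V : Set E) < 2 * (ε * ρ) := by
      have := H y hyA hyd
      nlinarith
    obtain ⟨v, hvV, hvd⟩ := (Metric.infDist_lt_iff ⟨0, V.zero_mem⟩).1 h1
    have hvn : ‖v‖ ≤ 2 * ρ := by
      have h2 : ‖v‖ ≤ ‖y - x‖ + ‖y - x - v‖ := by
        have hveq : v = (y - x) - (y - x - v) := by abel
        calc ‖v‖ = ‖(y - x) - (y - x - v)‖ := by rw [← hveq]
        _ ≤ ‖y - x‖ + ‖y - x - v‖ := norm_sub_le _ _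
      have h3 : ‖y - x‖ ≤ ρ := by rwa [← dist_eq_norm]
      have hvd' : ‖y - x - v‖ < 2 * (ε * ρ) := by rwa [dist_eq_norm] at hvd
      nlinarith
    obtain ⟨c₀, hc₀t, hc₀d⟩ := ht₀cover v hvV hvn
    have hyc₀ : dist y (x + c₀) ≤ 3 * ε * ρ := by
      have : dist y (x + c₀) = dist (y - x) c₀ := by
        rw [dist_eq_norm, dist_eq_norm]
        congr 1
        abel
      rw [this]
      calc dist (y - x) c₀ ≤ dist (y - x) v + dist v c₀ := dist_triangle _ _ _
      _ ≤ 3 * ε * ρ := by nlinarith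
    have hne : (A ∩ Metric.closedBall (x + c₀) (3 * ε * ρ)).Nonempty :=
      ⟨y, hyA, Metric.mem_closedBall.2 hyc₀⟩
    refine ⟨aa c₀, Finset.mem_image_of_mem aa hc₀t, ?_⟩
    have hspec := hne.choose_spec
    have haac : aa c₀ = hne.choose := by simp only [haa, dif_pos hne]
    rw [haac]
    calc dist y hne.choose ≤ dist y (x + c₀) + dist (x + c₀) hne.choose := dist_triangle _ _ _
    _ ≤ 3 * ε * ρ + 3 * ε * ρ := by
        refine add_le_add hyc₀ ?_
        rw [dist_comm]
        exact Metric.mem_closedBall.1 hspec.2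
    _ = 6 * ε * ρ := by ring

lemma iterate_cover {A : Set E} (hA : Bornology.IsBounded A) {ℓ : ℕ} {ε ρ₀ : ℝ}
    (hε : 0 < ε) (hε6 : ε ≤ 1/6) (hρ₀ : 0 < ρ₀)
    (P : ∀ x ∈ A, ∀ ρ : ℝ, 0 < ρ → ρ ≤ ρ₀ → ∃ V : Submodule ℝ E,
      Module.finrank ℝ V ≤ ℓ ∧
      ∀ y ∈ A, dist y x ≤ ρ → Metric.infDist (y - x) (V : Set E) ≤ ε * ρ) :
    ∃ M₀ : ℕ, ∀ m : ℕ, ∃ t : Finset E, ↑t ⊆ A ∧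
      (t.card : ℝ) ≤ (M₀ : ℝ) * ((4 * (Real.sqrt n + 1) / ε + 1) ^ ℓ) ^ m ∧
      A ⊆ ⋃ c ∈ t, Metric.closedBall c ((6 * ε) ^ m * ρ₀) := by
  classical
  set N : ℝ := (4 * (Real.sqrt n + 1) / ε + 1) ^ ℓ with hN
  have hN0 : 0 ≤ N := by positivity
  -- base cover
  have htb : TotallyBounded A :=
    (hA.isCompact_closure.totallyBounded).subset subset_closure
  obtain ⟨s, hsA, hsfin, hscov⟩ := finite_approx_of_totallyBounded htb ρ₀ hρ₀
  refine ⟨hsfin.toFinset.card, ?_⟩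
  have step : ∀ c ∈ A, ∀ ρ : ℝ, 0 < ρ → ρ ≤ ρ₀ →
      ∃ t : Finset E, ↑t ⊆ A ∧ (t.card : ℝ) ≤ N ∧
        ∀ y ∈ A, dist y c ≤ ρ → ∃ c' ∈ t, dist y c' ≤ 6 * ε * ρ := by
    intro c hc ρ hρ hρ'
    obtain ⟨V, hV, hVp⟩ := P c hc ρ hρ hρ'
    exact cover_step hc hρ hε (by linarith) V hV hVp
  intro m
  induction m with
  | zero =>
    refine ⟨hsfin.toFinset, ?_, ?_, ?_⟩
    · intro z hz
      simp only [Set.Finite.coe_toFinset] at hz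
      exact hsA hz
    · simp
    · intro y hy
      obtain ⟨c, hcs, hcd⟩ := Set.mem_iUnion₂.1 (hscov hy)
      refine Set.mem_iUnion₂.2 ⟨c, hsfin.mem_toFinset.2 hcs, ?_⟩
      simp only [pow_zero, one_mul]
      exact Metric.ball_subset_closedBall hcd
  | succ m ih =>
    obtain ⟨t, htA, htcard, htcov⟩ := ih
    set ρ : ℝ := (6 * ε) ^ m * ρ₀ with hρdef
    have hρpos : 0 < ρ := by positivity
    have hρle : ρ ≤ ρ₀ := by
      have h61 : 6 * ε ≤ 1 := by linarith
      have : (6 * ε) ^ m ≤ 1 := pow_le_one₀ (by positivity) h61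
      nlinarith
    set sc : E → Finset E := fun c =>
      if h : c ∈ A then (step c h ρ hρpos hρle).choose else ∅ with hsc
    refine ⟨t.biUnion sc, ?_, ?_, ?_⟩
    · intro z hz
      simp only [Finset.coe_biUnion, Set.mem_iUnion, Finset.mem_coe] at hz
      obtain ⟨c, hct, hz⟩ := hz
      have hcA : c ∈ A := htA hct
      simp only [hsc, dif_pos hcA] at hz
      exact (step c hcA ρ hρpos hρle).choose_spec.1 hz
    · calc ((t.biUnion sc).card : ℝ) ≤ ((∑ c ∈ t, (sc c).card : ℕ) : ℝ) := by
            exact_mod_cast Finset.card_biUnion_le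
      _ = ∑ c ∈ t, ((sc c).card : ℝ) := by push_cast; ring
      _ ≤ ∑ _c ∈ t, N := by
            refine Finset.sum_le_sum fun c hct => ?_
            have hcA : c ∈ A := htA hct
            simp only [hsc, dif_pos hcA]
            exact (step c hcA ρ hρpos hρle).choose_spec.2.1
      _ = (t.card : ℝ) * N := by rw [Finset.sum_const, nsmul_eq_mul]
      _ ≤ ((hsfin.toFinset.card : ℝ) * N ^ m) * N := by nlinarith
      _ = (hsfin.toFinset.card : ℝ) * N ^ (m + 1) := by ring
    · intro y hy
      obtain ⟨c, hct, hcd⟩ := Set.mem_iUnion₂.1 (htcov hy)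
      have hcA : c ∈ A := htA hct
      obtain ⟨c', hc't, hc'd⟩ := (step c hcA ρ hρpos hρle).choose_spec.2.2 y hy
        (Metric.mem_closedBall.1 hcd)
      refine Set.mem_iUnion₂.2 ⟨c', ?_, ?_⟩
      · refine Finset.mem_biUnion.2 ⟨c, hct, ?_⟩
        simp only [hsc, dif_pos hcA]
        exact hc't
      · refine Metric.mem_closedBall.2 ?_
        calc dist y c' ≤ 6 * ε * ρ := hc'd
        _ = (6 * ε) ^ (m + 1) * ρ₀ := by rw [hρdef]; ring

end WhiteProof
namespace WhiteProof

variable {n : ℕ}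

local notation "E" => EuclideanSpace ℝ (Fin n)

lemma hmeasure_zero {A : Set E} {ℓ : ℕ} {ε ρ₀ : ℝ} (hε : 0 < ε) (hε6 : ε < 1/6)
    (hρ₀ : 0 < ρ₀) (hA : Bornology.IsBounded A)
    (P : ∀ x ∈ A, ∀ ρ : ℝ, 0 < ρ → ρ ≤ ρ₀ → ∃ V : Submodule ℝ E,
      Module.finrank ℝ V ≤ ℓ ∧
      ∀ y ∈ A, dist y x ≤ ρ → Metric.infDist (y - x) (V : Set E) ≤ ε * ρ)
    (d : ℝ) (hd : 0 < d)
    (hq : ((4 * (Real.sqrt n + 1) / ε + 1) ^ ℓ) * (6 * ε) ^ d < 1) :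
    μH[d] A = 0 := by
  classical
  obtain ⟨M₀, hM⟩ := iterate_cover hA hε (le_of_lt hε6) hρ₀ P
  choose T hTA hTcard hTcov using hM
  set N : ℝ := (4 * (Real.sqrt n + 1) / ε + 1) ^ ℓ with hNdef
  have hN0 : 0 ≤ N := by positivity
  set τ : ℝ := 6 * ε with hτdef
  have hτ0 : 0 < τ := by positivity
  have hτ1 : τ < 1 := by rw [hτdef]; linarith
  set R : ℕ → ℝ := fun m => τ ^ m * ρ₀ with hRdef
  have hR0 : ∀ m, 0 < R m := fun m => by positivity
  set q : ℝ := N * τ ^ d with hqdef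
  have hq0 : 0 ≤ q := by
    have : (0:ℝ) ≤ τ ^ d := Real.rpow_nonneg hτ0.le d
    exact mul_nonneg hN0 this
  have hq1 : q < 1 := hq
  set C : ℝ := (M₀ : ℝ) * (2 * ρ₀) ^ d with hCdef
  have hC0 : 0 ≤ C := by
    have : (0:ℝ) ≤ (2*ρ₀) ^ d := Real.rpow_nonneg (by positivity) d
    positivity
  -- the key real identity
  have hkey : ∀ m : ℕ, ((M₀ : ℝ) * N ^ m) * (2 * R m) ^ d = C * q ^ m := by
    intro m
    have h2R : (2 * R m) = (2 * ρ₀) * τ ^ m := by rw [hRdef]; ring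
    have hrw : (2 * R m) ^ d = (2 * ρ₀) ^ d * (τ ^ d) ^ m := by
      rw [h2R, Real.mul_rpow (by positivity) (by positivity)]
      congr 1
      rw [← Real.rpow_natCast τ m, ← Real.rpow_mul hτ0.le, mul_comm,
        Real.rpow_mul hτ0.le, Real.rpow_natCast]
    rw [hrw, hCdef, hqdef]
    rw [mul_pow]
    ring
  -- the covering sets
  set t : ∀ m : ℕ, {c // c ∈ T m} → Set E := fun m i => Metric.closedBall (i : E) (R m)
    with htdef
  have hμle : μH[d] A ≤ liminf (fun m => ∑ i, EMetric.diam (t m i) ^ d) atTop := by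
    refine MeasureTheory.Measure.hausdorffMeasure_le_liminf_sum d A (fun m => ENNReal.ofReal (2 * R m)) ?_ t ?_ ?_
    · have hreal : Tendsto (fun m : ℕ => 2 * R m) atTop (nhds 0) := by
        have := tendsto_pow_atTop_nhds_zero_of_lt_one hτ0.le hτ1
        have h2 := this.const_mul (2 * ρ₀)
        simp only [mul_zero] at h2
        refine h2.congr fun m => ?_
        rw [hRdef]; ring
      have := ENNReal.tendsto_ofReal hreal
      simpa using this
    · refine Eventually.of_forall fun m => fun i => ?_
      refine Metric.ediam_le_of_forall_dist_le fun x hx y hy => ?_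
      have hx' := Metric.mem_closedBall.1 hx
      have hy' := Metric.mem_closedBall.1 hy
      calc dist x y ≤ dist x (i : E) + dist (i : E) y := dist_triangle _ _ _
      _ ≤ 2 * R m := by rw [dist_comm (i : E) y]; linarith
    · refine Eventually.of_forall fun m => fun y hy => ?_
      obtain ⟨c, hct, hcd⟩ := Set.mem_iUnion₂.1 (hTcov m hy)
      exact Set.mem_iUnion.2 ⟨⟨c, hct⟩, hcd⟩
  have hsum_le : ∀ m : ℕ, (∑ i, EMetric.diam (t m i) ^ d) ≤ ENNReal.ofReal (C * q ^ m) := by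
    intro m
    have hterm : ∀ i : {c // c ∈ T m}, EMetric.diam (t m i) ^ d
        ≤ ENNReal.ofReal ((2 * R m) ^ d) := by
      intro i
      have h1 : EMetric.diam (t m i) ≤ ENNReal.ofReal (2 * R m) := by
        refine Metric.ediam_le_of_forall_dist_le fun x hx y hy => ?_
        have hx' := Metric.mem_closedBall.1 hx
        have hy' := Metric.mem_closedBall.1 hy
        calc dist x y ≤ dist x (i : E) + dist (i : E) y := dist_triangle _ _ _
        _ ≤ 2 * R m := by rw [dist_comm (i : E) y]; linarith
      calc EMetric.diam (t m i) ^ d ≤ (ENNReal.ofReal (2 * R m)) ^ d :=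
            ENNReal.rpow_le_rpow h1 hd.le
      _ = ENNReal.ofReal ((2 * R m) ^ d) := by
            rw [← ENNReal.ofReal_rpow_of_pos (by positivity)]
    calc (∑ i, EMetric.diam (t m i) ^ d)
        ≤ ((T m).card : ℝ≥0∞) * ENNReal.ofReal ((2 * R m) ^ d) := by
          rw [← Fintype.card_coe, ← nsmul_eq_mul, ← Finset.card_univ, ← Finset.sum_const]
          exact Finset.sum_le_sum fun i _ => hterm i
    _ ≤ ENNReal.ofReal ((M₀ : ℝ) * N ^ m) * ENNReal.ofReal ((2 * R m) ^ d) := by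
          refine mul_le_mul_left ?_ _
          rw [← ENNReal.ofReal_natCast]
          exact ENNReal.ofReal_le_ofReal (hTcard m)
    _ = ENNReal.ofReal (((M₀ : ℝ) * N ^ m) * (2 * R m) ^ d) := by
          rw [← ENNReal.ofReal_mul (by positivity)]
    _ = ENNReal.ofReal (C * q ^ m) := by rw [hkey m]
  have hbtend : Tendsto (fun m : ℕ => ENNReal.ofReal (C * q ^ m)) atTop (nhds 0) := by
    have hreal : Tendsto (fun m : ℕ => C * q ^ m) atTop (nhds 0) := by
      have := (tendsto_pow_atTop_nhds_zero_of_lt_one hq0 hq1).const_mul C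
      simpa using this
    have := ENNReal.tendsto_ofReal hreal
    simpa using this
  have hliminf : liminf (fun m => ∑ i, EMetric.diam (t m i) ^ d) atTop
      ≤ liminf (fun m : ℕ => ENNReal.ofReal (C * q ^ m)) atTop :=
    liminf_le_liminf (Eventually.of_forall hsum_le)
  rw [hbtend.liminf_eq] at hliminf
  exact le_antisymm (hμle.trans hliminf) zero_le

lemma exists_eps (n ℓ : ℕ) {d : ℝ} (hd : (ℓ : ℝ) < d) :
    ∃ ε : ℝ, 0 < ε ∧ ε < 1/6 ∧ ((4 * (Real.sqrt n + 1) / ε + 1) ^ ℓ) * (6 * ε) ^ d < 1 := by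
  set B : ℝ := 4 * (Real.sqrt n + 1) + 1 with hBdef
  have hsn : (0:ℝ) ≤ Real.sqrt n := Real.sqrt_nonneg _
  have hB1 : (1:ℝ) ≤ B := by rw [hBdef]; linarith
  have hB0 : (0:ℝ) < B := by linarith
  set c : ℝ := d - ℓ with hcdef
  have hc0 : 0 < c := by rw [hcdef]; linarith
  set C : ℝ := B ^ ℓ * 6 ^ d with hCdef
  have hC0 : 0 < C := by
    have : (0:ℝ) < (6:ℝ) ^ d := Real.rpow_pos_of_pos (by norm_num) d
    positivity
  set β : ℝ := (1 / (C + 1)) ^ (1 / c) with hβdef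
  have hβ0 : 0 < β := Real.rpow_pos_of_pos (by positivity) _
  set ε : ℝ := min (1/7) β with hεdef
  have hε0 : 0 < ε := lt_min (by norm_num) hβ0
  have hε1 : ε ≤ 1 := le_trans (min_le_left _ _) (by norm_num)
  refine ⟨ε, hε0, lt_of_le_of_lt (min_le_left _ _) (by norm_num), ?_⟩
  have hεβ : ε ≤ β := min_le_right _ _
  -- bound the base
  have hbase : 4 * (Real.sqrt n + 1) / ε + 1 ≤ B / ε := by
    rw [hBdef]
    rw [div_add' _ _ _ hε0.ne', div_le_div_iff₀ hε0 hε0]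
    nlinarith
  have hbase0 : (0:ℝ) ≤ 4 * (Real.sqrt n + 1) / ε + 1 := by positivity
  have h1 : ((4 * (Real.sqrt n + 1) / ε + 1) ^ ℓ) * (6 * ε) ^ d
      ≤ (B / ε) ^ ℓ * (6 * ε) ^ d := by
    have := pow_le_pow_left₀ hbase0 hbase ℓ
    have h6 : (0:ℝ) ≤ (6 * ε) ^ d := Real.rpow_nonneg (by positivity) d
    nlinarith
  have h2 : (B / ε) ^ ℓ * (6 * ε) ^ d = C * ε ^ c := by
    rw [hCdef, hcdef]
    rw [Real.mul_rpow (by norm_num) hε0.le, div_pow]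
    rw [Real.rpow_sub hε0, Real.rpow_natCast]
    field_simp
  have h3 : ε ^ c ≤ 1 / (C + 1) := by
    calc ε ^ c ≤ β ^ c := Real.rpow_le_rpow hε0.le hεβ hc0.le
    _ = 1 / (C + 1) := by
        rw [hβdef, ← Real.rpow_mul (by positivity), one_div_mul_cancel hc0.ne',
          Real.rpow_one]
  calc ((4 * (Real.sqrt n + 1) / ε + 1) ^ ℓ) * (6 * ε) ^ d ≤ C * ε ^ c := by
        rw [← h2]; exact h1
  _ ≤ C * (1 / (C + 1)) := by nlinarith [Real.rpow_nonneg hε0.le c]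
  _ < 1 := by rw [mul_one_div, div_lt_one (by linarith)]; linarith

end WhiteProof
namespace WhiteProof

variable {n : ℕ}

local notation "E" => EuclideanSpace ℝ (Fin n)

set_option maxHeartbeats 1000000 in
lemma key_blowup {Ω : Set E} (hΩo : IsOpen Ω) {f : E → ℝ}
    (hf_usc : UpperSemicontinuousOn f Ω)
    {G : E → Set (E → ℝ)}
    (hG_conical : ∀ x ∈ Ω, ∀ g ∈ G x, IsConical g)
    (hI' : ∀ x ∈ Ω, ∀ g ∈ G x, g 0 = f x)
    (hII' : WhiteHypII Ω f G) {ℓ : ℕ}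
    {x : E} (hx : x ∈ whiteStratum Ω f G ℓ) {ε : ℝ} (hε : 0 < ε) :
    ∃ δ : ℝ, 0 < δ ∧ ∃ ρs : ℝ, 0 < ρs ∧ ∀ ρ : ℝ, 0 < ρ → ρ ≤ ρs →
      ∃ V : Submodule ℝ E, Module.finrank ℝ V ≤ ℓ ∧
        ∀ y : E, dist y x ≤ ρ → f x - δ ≤ f y →
          Metric.infDist (y - x) (V : Set E) ≤ ε * ρ := by
  classical
  obtain ⟨hxΩ, hxf, hxd⟩ := hx
  -- a closed ball around x inside Ω
  obtain ⟨ρ₁, hρ₁, hballΩ⟩ := Metric.isOpen_iff.1 hΩo x hxΩ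
  set ρΩ : ℝ := ρ₁ / 2 with hρΩdef
  have hρΩpos : 0 < ρΩ := by positivity
  have hcbΩ : Metric.closedBall x ρΩ ⊆ Ω := by
    refine Subset.trans ?_ hballΩ
    intro y hy
    have := Metric.mem_closedBall.1 hy
    exact Metric.mem_ball.2 (by rw [hρΩdef] at this; linarith)
  obtain ⟨b, hb⟩ := usc_bddAbove (isCompact_closedBall x ρΩ) (hf_usc.mono hcbΩ)
  by_contra H
  push_neg at H
  -- H : ∀ δ, 0 < δ → ∀ ρs, 0 < ρs → ∃ ρ, 0 < ρ ∧ ρ ≤ ρs ∧ ∀ V, finrank ≤ ℓ →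
  --       ∃ y, dist y x ≤ ρ ∧ f x - δ ≤ f y ∧ ε * ρ < infDist (y-x) V
  -- build a bad sequence of scales
  have step : ∀ (i : ℕ) (p : ℝ), 0 < p →
      ∃ ρ : ℝ, (0 < ρ ∧ ρ ≤ p / 2 ∧ ρ ≤ 1 / (i + 1) ∧ ρ ≤ ρΩ / 2) ∧
        ∀ V : Submodule ℝ E, Module.finrank ℝ V ≤ ℓ →
          ∃ y : E, dist y x ≤ ρ ∧ f x - 1 / (i + 1) ≤ f y ∧
            ε * ρ < Metric.infDist (y - x) (V : Set E) := by
    intro i p hp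
    obtain ⟨ρ, hρ0, hρle, hbad⟩ := H (1 / (i + 1)) (by positivity)
      (min (p / 2) (min (1 / (i + 1)) (ρΩ / 2))) (by positivity)
    refine ⟨ρ, ⟨hρ0, ?_, ?_, ?_⟩, hbad⟩
    · exact hρle.trans (min_le_left _ _)
    · exact hρle.trans ((min_le_right _ _).trans (min_le_left _ _))
    · exact hρle.trans ((min_le_right _ _).trans (min_le_right _ _))
  choose! Φ hΦ₁ hΦ₂ using step
  -- the recursively defined sequence of scales
  set s : ℕ → {p : ℝ // 0 < p} := fun i => Nat.rec ⟨1, one_pos⟩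
    (fun i prev => ⟨Φ i prev.1, (hΦ₁ i prev.1 prev.2).1⟩) i with hsdef
  set r : ℕ → ℝ := fun i => (s (i + 1)).1 with hrdef
  have hs_succ : ∀ i, (s (i + 1)).1 = Φ i (s i).1 := fun i => rfl
  have hr_pos : ∀ i, 0 < r i := fun i => (s (i + 1)).2
  have hr_props : ∀ i, r i ≤ (s i).1 / 2 ∧ r i ≤ 1 / (i + 1) ∧ r i ≤ ρΩ / 2 := by
    intro i
    have h := hΦ₁ i (s i).1 (s i).2
    exact ⟨h.2.1, h.2.2.1, h.2.2.2⟩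
  have hr_bad : ∀ i, ∀ V : Submodule ℝ E, Module.finrank ℝ V ≤ ℓ →
      ∃ y : E, dist y x ≤ r i ∧ f x - 1 / (i + 1) ≤ f y ∧
        ε * r i < Metric.infDist (y - x) (V : Set E) := by
    intro i
    exact hΦ₂ i (s i).1 (s i).2
  have hr_half : ∀ i, r (i + 1) ≤ r i / 2 := fun i => (hr_props (i + 1)).1
  have hr_anti : StrictAnti r := by
    refine strictAnti_nat_of_succ_lt fun i => ?_
    have := hr_half i
    have := hr_pos i
    linarith
  have hr_le : ∀ i, r i ≤ 1 / (i + 1) := fun i => (hr_props i).2.1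
  have hr_tend : Tendsto r atTop (nhds 0) := by
    refine squeeze_zero (fun i => (hr_pos i).le) hr_le ?_
    exact_mod_cast tendsto_one_div_add_atTop_nhds_zero_nat (𝕜 := ℝ)
  -- double the scales and apply hypothesis (ii')
  set r' : ℕ → ℝ := fun i => 2 * r i with hr'def
  have hr'_pos : ∀ i, 0 < r' i := fun i => by have := hr_pos i; positivity
  have hr'_anti : StrictAnti r' := fun i j hij => by
    have := hr_anti hij
    simp only [hr'def]
    linarith
  have hr'_tend : Tendsto r' atTop (nhds 0) := by
    have := hr_tend.const_mul (2 : ℝ)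
    simpa using this
  obtain ⟨φ, hφ, g, hgG, hP⟩ := hII' x hxΩ r' hr'_pos hr'_anti hr'_tend
  have hgcon : IsConical g := hG_conical x hxΩ g hgG
  set V₀ : Submodule ℝ E := Submodule.span ℝ (spine g) with hV₀def
  have hV₀ : Module.finrank ℝ V₀ ≤ ℓ := hxd g hgG
  -- bad points at the subsequence scales
  have hbad' : ∀ j : ℕ, ∃ y : E, dist y x ≤ r (φ j) ∧
      f x - 1 / (φ j + 1) ≤ f y ∧
      ε * r (φ j) < Metric.infDist (y - x) (V₀ : Set E) :=
    fun j => hr_bad (φ j) V₀ hV₀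
  choose y hy₁ hy₂ hy₃ using hbad'
  set z : ℕ → E := fun j => (r' (φ j))⁻¹ • (y j - x) with hzdef
  have hz_norm : ∀ j, ‖z j‖ ≤ 1 / 2 := by
    intro j
    have h1 : ‖y j - x‖ ≤ r (φ j) := by
      rw [← dist_eq_norm]; exact hy₁ j
    have h2 : 0 < r' (φ j) := hr'_pos (φ j)
    rw [hzdef]
    simp only [norm_smul, Real.norm_eq_abs, abs_of_pos (inv_pos.2 h2)]
    rw [hr'def]
    rw [inv_mul_le_iff₀ (by positivity)]
    have := hr_pos (φ j)
    nlinarith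
  have hz_recover : ∀ j, x + r' (φ j) • z j = y j := by
    intro j
    rw [hzdef]
    simp only
    rw [smul_inv_smul₀ (hr'_pos (φ j)).ne']
    abel
  have hz_inf : ∀ j, ε / 2 ≤ Metric.infDist (z j) (V₀ : Set E) := by
    intro j
    have h2 : 0 < r' (φ j) := hr'_pos (φ j)
    have := infDist_inv_smul_ge V₀ (y j - x) (r' (φ j)) h2
    have h3 : ε * r (φ j) ≤ Metric.infDist (y j - x) (V₀ : Set E) := (hy₃ j).le
    have h4 : (r' (φ j))⁻¹ * (ε * r (φ j)) = ε / 2 := by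
      rw [hr'def]
      field_simp [(hr_pos (φ j)).ne']
    calc ε / 2 = (r' (φ j))⁻¹ * (ε * r (φ j)) := h4.symm
    _ ≤ (r' (φ j))⁻¹ * Metric.infDist (y j - x) (V₀ : Set E) := by
        have := inv_pos.2 h2
        nlinarith
    _ ≤ Metric.infDist ((r' (φ j))⁻¹ • (y j - x)) (V₀ : Set E) := this
  -- extract a convergent subsequence of the rescaled bad points
  have hz_mem : ∀ j, z j ∈ Metric.closedBall (0 : E) (1 / 2) := by
    intro j
    rw [Metric.mem_closedBall, dist_zero_right]
    exact hz_norm j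
  obtain ⟨zlim, hzlimmem, σ, hσ, hzconv⟩ :=
    (isCompact_closedBall (0 : E) (1 / 2)).tendsto_subseq hz_mem
  have hzlimnorm : ‖zlim‖ ≤ 1 / 2 := by
    have := Metric.mem_closedBall.1 hzlimmem
    rwa [dist_zero_right] at this
  have hzliminf : ε / 2 ≤ Metric.infDist zlim (V₀ : Set E) := by
    have hc : Tendsto (fun k => Metric.infDist (z (σ k)) (V₀ : Set E)) atTop
        (nhds (Metric.infDist zlim (V₀ : Set E))) :=
      ((Metric.continuous_infDist_pt (V₀ : Set E)).tendsto zlim).comp hzconv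
    exact ge_of_tendsto hc (Eventually.of_forall fun k => hz_inf (σ k))
  -- the merged sequence
  set w : ℕ → E := fun j => if h : ∃ k, σ k = j then z j else zlim with hwdef
  have hw_ball : ∀ j, w j ∈ Metric.ball (0 : E) 1 := by
    intro j
    rw [mem_ball_zero_iff]
    by_cases h : ∃ k, σ k = j
    · simp only [hwdef, dif_pos h]
      exact lt_of_le_of_lt (hz_norm j) (by norm_num)
    · simp only [hwdef, dif_neg h]
      exact lt_of_le_of_lt hzlimnorm (by norm_num)
  have hw_tend : Tendsto w atTop (nhds zlim) := by
    rw [Metric.tendsto_atTop]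
    intro η hη
    obtain ⟨K, hK⟩ := (Metric.tendsto_atTop.1 hzconv) η hη
    refine ⟨σ K + 1, fun j hj => ?_⟩
    by_cases h : ∃ k, σ k = j
    · obtain ⟨k, hk⟩ := h
      have hkK : K < k := by
        by_contra hkK
        push_neg at hkK
        have := hσ.le_iff_le.2 hkK
        omega
      have hex : ∃ k', σ k' = j := ⟨k, hk⟩
      have : w j = z (σ k) := by
        simp only [hwdef, dif_pos hex]
        rw [← hk]
      rw [this]
      exact hK k hkK.le
    · simp only [hwdef, dif_neg h]
      simpa using hη
  have hlimsup_le : limsup (fun j => f (x + r' (φ j) • w j)) atTop ≤ g zlim := by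
    refine hP zlim ?_ w hw_ball hw_tend
    rw [mem_ball_zero_iff]
    exact lt_of_le_of_lt hzlimnorm (by norm_num)
  -- the sequence is bounded above
  have hmem_ball : ∀ j, x + r' (φ j) • w j ∈ Metric.closedBall x ρΩ := by
    intro j
    rw [Metric.mem_closedBall, dist_comm, dist_eq_norm]
    have h1 : ‖w j‖ ≤ 1 := by
      have := mem_ball_zero_iff.1 (hw_ball j)
      linarith
    have h2 : x - (x + r' (φ j) • w j) = -(r' (φ j) • w j) := by abel
    rw [h2, norm_neg, norm_smul, Real.norm_eq_abs, abs_of_pos (hr'_pos (φ j))]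
    have h3 : r (φ j) ≤ ρΩ / 2 := (hr_props (φ j)).2.2
    have h5 : r' (φ j) = 2 * r (φ j) := rfl
    rw [h5]
    nlinarith [hr_pos (φ j)]
  have hbdd : IsBoundedUnder (· ≤ ·) atTop (fun j => f (x + r' (φ j) • w j)) := by
    refine ⟨b, ?_⟩
    rw [eventually_map]
    exact Eventually.of_forall fun j => hb _ (hmem_ball j)
  -- lower bound on the limsup
  have hfx_le : f x ≤ limsup (fun j => f (x + r' (φ j) • w j)) atTop := by
    by_contra hlt
    push_neg at hlt
    set L := limsup (fun j => f (x + r' (φ j) • w j)) atTop with hLdef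
    set c : ℝ := (L + f x) / 2 with hcdef
    have hcL : L < c := by rw [hcdef]; linarith
    have hcfx : c < f x := by rw [hcdef]; linarith
    have hfreq : ∃ᶠ j in atTop, c ≤ f (x + r' (φ j) • w j) := by
      rw [frequently_atTop]
      intro N
      obtain ⟨K₀, hK₀⟩ := exists_nat_ge (1 / (f x - c))
      set k : ℕ := max N K₀ with hkdef
      refine ⟨σ k, le_trans (le_max_left N K₀) (le_trans (hσ.le_apply) le_rfl), ?_⟩
      have hwk : w (σ k) = z (σ k) := by
        have hex : ∃ k', σ k' = σ k := ⟨k, rfl⟩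
        simp only [hwdef, dif_pos hex]
      rw [hwk, hz_recover (σ k)]
      have h1 : f x - 1 / (φ (σ k) + 1) ≤ f (y (σ k)) := hy₂ (σ k)
      have h2 : (K₀ : ℝ) ≤ φ (σ k) := by
        have hk1 : k ≤ σ k := hσ.le_apply
        have hk2 : σ k ≤ φ (σ k) := hφ.le_apply
        have : K₀ ≤ φ (σ k) := le_trans (le_max_right N K₀) (le_trans hk1 hk2)
        exact_mod_cast this
      have h3 : 1 / ((φ (σ k) : ℝ) + 1) ≤ f x - c := by
        have hfc : 0 < f x - c := by linarith
        rw [div_le_iff₀ (by positivity)]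
        rw [div_le_iff₀ hfc] at hK₀
        nlinarith
      linarith
    have := le_limsup_of_frequently_le hfreq hbdd
    rw [← hLdef] at this
    linarith
  -- conclude : zlim is in the spine, contradiction
  have hg0 : g 0 = f x := hI' x hxΩ g hgG
  have hspine : zlim ∈ spine g := by
    refine mem_spine_of_ge hgcon ?_
    rw [hg0]
    exact le_trans hfx_le hlimsup_le
  have hmem : zlim ∈ (V₀ : Set E) := Submodule.subset_span hspine
  have := Metric.infDist_zero_of_mem hmem
  rw [this] at hzliminf
  linarith

end WhiteProof

set_option maxHeartbeats 1000000 in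
/-- White's stratification theorem, dimension part: under the Structural Hypotheses
(i') and (ii'), `dim_H(Σ_ℓ) ≤ ℓ` for every `ℓ ∈ {1,…,n}`. -/
theorem white_stratification_dimension {n : ℕ} (Ω : Set (EuclideanSpace ℝ (Fin n)))
    (hΩo : IsOpen Ω) (hΩb : Bornology.IsBounded Ω)
    (f : EuclideanSpace ℝ (Fin n) → ℝ)
    (hf_usc : UpperSemicontinuousOn f Ω) (hf_nonneg : ∀ x ∈ Ω, 0 ≤ f x)
    (G : EuclideanSpace ℝ (Fin n) → Set (EuclideanSpace ℝ (Fin n) → ℝ))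
    (hG_conical : ∀ x ∈ Ω, ∀ g ∈ G x, IsConical g)
    (hG_compact : ∀ x ∈ Ω, IsCompactClass (G x))
    (hI' : ∀ x ∈ Ω, ∀ g ∈ G x, g 0 = f x)
    (hII' : WhiteHypII Ω f G) :
    ∀ ℓ : ℕ, 1 ≤ ℓ → ℓ ≤ n → dimH (whiteStratum Ω f G ℓ) ≤ (ℓ : ENNReal) := by
  classical
  intro ℓ hℓ1 hℓn
  refine dimH_le fun d' hd' => ?_
  by_contra hgt
  push_neg at hgt
  have hℓd : (ℓ : ℝ) < (d' : ℝ) := by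
    have h1 : ((ℓ : ℝ≥0) : ℝ≥0∞) < (d' : ℝ≥0∞) := by simpa using hgt
    exact_mod_cast h1
  have hd0 : (0 : ℝ) < (d' : ℝ) := by
    have h0 : (1:ℝ) ≤ (ℓ:ℝ) := by exact_mod_cast hℓ1
    linarith
  obtain ⟨ε, hε0, hε6, hεq⟩ := WhiteProof.exists_eps n ℓ hℓd
  -- the countable decomposition
  set T : ℕ → ℚ → Set (EuclideanSpace ℝ (Fin n)) := fun k q =>
    {x ∈ whiteStratum Ω f G ℓ |
      (∀ ρ : ℝ, 0 < ρ → ρ ≤ 1 / (k + 1) →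
        ∃ V : Submodule ℝ (EuclideanSpace ℝ (Fin n)), Module.finrank ℝ V ≤ ℓ ∧
          ∀ y, dist y x ≤ ρ → f x - 1 / (k + 1) ≤ f y →
            Metric.infDist (y - x) (V : Set (EuclideanSpace ℝ (Fin n))) ≤ ε * ρ) ∧
      (q : ℝ) ≤ f x ∧ f x < q + 1 / (2 * (k + 1))} with hTdef
  have hcover : whiteStratum Ω f G ℓ ⊆ ⋃ p : ℕ × ℚ, T p.1 p.2 := by
    intro x hxSt
    obtain ⟨δ, hδ0, ρs, hρs0, hprop⟩ :=
      WhiteProof.key_blowup hΩo hf_usc hG_conical hI' hII' hxSt hε0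
    obtain ⟨k, hk⟩ := exists_nat_ge (max (1 / δ) (1 / ρs))
    have hkδ : 1 / ((k : ℝ) + 1) ≤ δ := by
      have h1 : 1 / δ ≤ (k : ℝ) := le_trans (le_max_left _ _) hk
      rw [div_le_iff₀ (by positivity)]
      rw [div_le_iff₀ hδ0] at h1
      nlinarith
    have hkρ : 1 / ((k : ℝ) + 1) ≤ ρs := by
      have h1 : 1 / ρs ≤ (k : ℝ) := le_trans (le_max_right _ _) hk
      rw [div_le_iff₀ (by positivity)]
      rw [div_le_iff₀ hρs0] at h1
      nlinarith
    obtain ⟨q, hq1, hq2⟩ := exists_rat_btwn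
      (by linarith [one_div_pos.2 (by positivity : (0:ℝ) < 2 * ((k:ℝ) + 1))] :
        f x - 1 / (2 * ((k:ℝ) + 1)) < f x)
    refine Set.mem_iUnion.2 ⟨(k, q), hxSt, ?_, hq2.le, by push_cast; linarith⟩
    intro ρ hρ0 hρle
    obtain ⟨V, hV, hVp⟩ := hprop ρ hρ0 (le_trans hρle hkρ)
    refine ⟨V, hV, fun y hyd hyf => hVp y hyd (by linarith)⟩
  have hTzero : ∀ p : ℕ × ℚ, μH[(d' : ℝ)] (T p.1 p.2) = 0 := by
    rintro ⟨k, q⟩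
    by_cases hne : (T k q).Nonempty
    swap
    · rw [Set.not_nonempty_iff_eq_empty.1 hne]; exact measure_empty
    refine WhiteProof.hmeasure_zero hε0 hε6
      (by positivity : (0:ℝ) < 1 / ((k:ℝ) + 1)) ?_ ?_ (d' : ℝ) hd0 hεq
    · exact hΩb.subset (fun y hy => hy.1.1)
    · intro x hx ρ hρ0 hρle
      obtain ⟨hxSt, hxP, hxq1, hxq2⟩ := hx
      obtain ⟨V, hV, hVp⟩ := hxP ρ hρ0 hρle
      refine ⟨V, hV, fun y hy hyd => ?_⟩
      obtain ⟨hySt, hyP, hyq1, hyq2⟩ := hy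
      refine hVp y hyd ?_
      have h1 : 1 / (2 * ((k:ℝ) + 1)) ≤ 1 / ((k:ℝ) + 1) := by
        rw [div_le_div_iff₀ (by positivity) (by positivity)]
        nlinarith
      linarith
  have hSzero : μH[(d' : ℝ)] (whiteStratum Ω f G ℓ) = 0 := by
    refine le_antisymm ?_ zero_le
    calc μH[(d' : ℝ)] (whiteStratum Ω f G ℓ) ≤ μH[(d' : ℝ)] (⋃ p : ℕ × ℚ, T p.1 p.2) :=
          measure_mono hcover
    _ = 0 := measure_iUnion_null hTzero
  rw [hd'] at hSzero
  exact ENNReal.top_ne_zero hSzero
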